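/- Let ⟨·,·⟩ be the sesquilinear form on H determined by ⟨e_j, e_k⟩ = δ_{jk} · ∏_{i=1}^{k} (1 − q^{2i}). Then (i) ⟨W x, y⟩ = ⟨x, Z y⟩ for all x, y ∈ H, i.e. W is adjoint to Z, and (ii) ⟨x, x⟩ > 0 for every x ∈ H with x ≠ 0. (This is the scalar product on ℋ of section 5 in the quantum disc case: it satisfies (f₀, f₀) = 1 and (T_f ψ₁, ψ₂) = (ψ₁, T_{f*} ψ₂), and (ψ, ψ) > 0 for all ψ ≠ 0.) -/

import Mathlib

/-- Let `⟨·,·⟩` be the sesquilinear form on `H = ℕ →₀ ℂ` (conjugate-linear in the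
first argument) determined by `⟨e_j, e_k⟩ = δ_{jk} ∏_{i=1}^{k} (1 - q^{2i})`.
Then (i) `⟨W x, y⟩ = ⟨x, Z y⟩` for all `x, y`, i.e. `W` is adjoint to `Z`,
and (ii) `⟨x, x⟩ > 0` for every `x ≠ 0`. -/
theorem scalar_product_adjoint_and_positive (q : ℝ) (hq0 : 0 < q) (hq1 : q < 1)
    (Z W : (ℕ →₀ ℂ) →ₗ[ℂ] (ℕ →₀ ℂ))
    (hZ : ∀ k : ℕ, Z (Finsupp.single k 1) = Finsupp.single (k + 1) 1)
    (hW0 : W (Finsupp.single 0 1) = 0)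
    (hW : ∀ k : ℕ, 1 ≤ k →
      W (Finsupp.single k 1) = ((1 - q ^ (2 * k) : ℝ) : ℂ) • Finsupp.single (k - 1) 1)
    (B : (ℕ →₀ ℂ) → (ℕ →₀ ℂ) → ℂ)
    (hBaddl : ∀ x₁ x₂ y, B (x₁ + x₂) y = B x₁ y + B x₂ y)
    (hBaddr : ∀ x y₁ y₂, B x (y₁ + y₂) = B x y₁ + B x y₂)
    (hBsmull : ∀ (c : ℂ) x y, B (c • x) y = (starRingEnd ℂ) c * B x y)
    (hBsmulr : ∀ (c : ℂ) x y, B x (c • y) = c * B x y)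
    (hBe : ∀ j k : ℕ, B (Finsupp.single j 1) (Finsupp.single k 1) =
      if j = k then ((∏ i ∈ Finset.Icc 1 k, (1 - q ^ (2 * i)) : ℝ) : ℂ) else 0) :
    (∀ x y, B (W x) y = B x (Z y)) ∧
    (∀ x : ℕ →₀ ℂ, x ≠ 0 → ∃ r : ℝ, 0 < r ∧ B x x = (r : ℂ)) := by
  set c : ℕ → ℝ := fun k => ∏ i ∈ Finset.Icc 1 k, (1 - q ^ (2 * i)) with hc
  have hcpos : ∀ k, 0 < c k := by
    intro k
    apply Finset.prod_pos
    intro i hi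
    have hi1 : 1 ≤ i := (Finset.mem_Icc.mp hi).1
    have : q ^ (2 * i) < 1 := pow_lt_one₀ hq0.le hq1 (by omega)
    linarith
  have hsingle : ∀ (k : ℕ) (d : ℂ), Finsupp.single k d = d • Finsupp.single k 1 := by
    intro k d; rw [Finsupp.smul_single', mul_one]
  have hBzerol : ∀ y, B 0 y = 0 := by
    intro y
    have := hBsmull 0 0 y
    simpa using this
  have hBzeror : ∀ x, B x 0 = 0 := by
    intro x
    have := hBsmulr 0 x 0
    simpa using this
  -- B (e_j, y) = y j * c j
  have hBl : ∀ (j : ℕ) (y : ℕ →₀ ℂ), B (Finsupp.single j 1) y = y j * (c j : ℂ) := by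
    intro j y
    induction y using Finsupp.induction_linear with
    | zero => simp [hBzeror]
    | add f g hf hg => rw [hBaddr, hf, hg, Finsupp.add_apply]; ring
    | single k d =>
        rw [hsingle k d, hBsmulr, hBe]
        rcases eq_or_ne j k with h | h
        · subst h; simp [hc]
        · simp [h, Ne.symm h]
  have hBr : ∀ (k : ℕ) (x : ℕ →₀ ℂ), B x (Finsupp.single k 1) =
      (starRingEnd ℂ) (x k) * (c k : ℂ) := by
    intro k x
    induction x using Finsupp.induction_linear with
    | zero => simp [hBzerol]
    | add f g hf hg => rw [hBaddl, hf, hg, Finsupp.add_apply, map_add]; ring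
    | single j d =>
        rw [hsingle j d, hBsmull, hBe]
        rcases eq_or_ne j k with h | h
        · subst h; simp [hc]
        · simp [h, Ne.symm h]
  -- core adjoint identity on basis
  have hcore : ∀ a k : ℕ, B (W (Finsupp.single a 1)) (Finsupp.single k 1)
      = B (Finsupp.single a 1) (Z (Finsupp.single k 1)) := by
    intro a k
    rw [hZ k, hBe]
    match a with
    | 0 => rw [hW0, hBzerol]; simp
    | m + 1 =>
        rw [hW (m + 1) (by omega), hBsmull, hBr]
        simp only [Nat.add_sub_cancel, Finsupp.single_apply]
        split_ifs with h1 h2 h2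
        · subst h1
          simp only [hc]
          rw [Finset.prod_Icc_succ_top (show 1 ≤ m + 1 by omega)]
          push_cast
          simp only [map_sub, map_one, map_mul, map_pow, Complex.conj_ofReal]
          ring
        · omega
        · omega
        · simp
  have adj : ∀ x y, B (W x) y = B x (Z y) := by
    intro x y
    induction x using Finsupp.induction_linear with
    | zero => simp [hBzerol]
    | add f g hf hg => rw [map_add, hBaddl, hBaddl, hf, hg]
    | single a b =>
        rw [hsingle a b, map_smul, hBsmull, hBsmull]
        congr 1
        induction y using Finsupp.induction_linear with
        | zero => simp [hBzeror]
        | add f g hf hg => rw [map_add, hBaddr, hBaddr, hf, hg]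
        | single k d => rw [hsingle k d, map_smul, hBsmulr, hBsmulr, hcore]
  refine ⟨adj, ?_⟩
  have hBxx : ∀ x : ℕ →₀ ℂ, B x x =
      ((∑ k ∈ x.support, Complex.normSq (x k) * c k : ℝ) : ℂ) := by
    intro x
    induction x using Finsupp.induction with
    | zero => simp [hBzerol]
    | single_add a b f ha hb ih =>
        have hfa : f a = 0 := Finsupp.notMem_support_iff.mp ha
        have hdisj : Disjoint (Finsupp.single a b).support f.support := by
          rw [Finsupp.support_single_ne_zero a hb]
          simpa using ha
        have hs : (Finsupp.single a b + f).support = insert a f.support := by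
          rw [Finsupp.support_add_eq hdisj, Finsupp.support_single_ne_zero a hb,
            ← Finset.insert_eq]
        have h1 : B (Finsupp.single a b) (Finsupp.single a b)
            = ((Complex.normSq b * c a : ℝ) : ℂ) := by
          rw [hsingle a b, hBsmull, hBsmulr, hBe, if_pos rfl]
          simp only [hc]
          rw [show ((Complex.normSq b * ∏ i ∈ Finset.Icc 1 a, (1 - q ^ (2 * i)) : ℝ) : ℂ)
              = ((Complex.normSq b : ℝ) : ℂ) *
                ((∏ i ∈ Finset.Icc 1 a, (1 - q ^ (2 * i)) : ℝ) : ℂ) from by push_cast; ring,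
            Complex.normSq_eq_conj_mul_self]
          ring
        have h2 : B (Finsupp.single a b) f = 0 := by
          rw [hsingle a b, hBsmull, hBl, hfa]; ring
        have h3 : B f (Finsupp.single a b) = 0 := by
          rw [hsingle a b, hBsmulr, hBr, hfa]; simp
        rw [hBaddl, hBaddr, hBaddr, ih, h1, h2, h3, hs, Finset.sum_insert ha]
        have hval : ∀ k ∈ f.support, (Finsupp.single a b + f) k = f k := by
          intro k hk
          have : k ≠ a := fun h => ha (h ▸ hk)
          simp [Finsupp.single_apply, this.symm]
        have hva : (Finsupp.single a b + f) a = b := by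
          simp [Finsupp.single_apply, hfa]
        have hsum : ∑ k ∈ f.support, Complex.normSq ((Finsupp.single a b + f) k) * c k
            = ∑ k ∈ f.support, Complex.normSq (f k) * c k :=
          Finset.sum_congr rfl (fun k hk => by rw [hval k hk])
        rw [hva, hsum]
        push_cast
        ring
  intro x hx
  refine ⟨∑ k ∈ x.support, Complex.normSq (x k) * c k, ?_, hBxx x⟩
  apply Finset.sum_pos
  · intro k hk
    exact mul_pos (Complex.normSq_pos.mpr (Finsupp.mem_support_iff.mp hk)) (hcpos k)
  · exact Finsupp.support_nonempty_iff.mpr hx
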